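/- Let d ≥ 1, t > 0, σ ≥ 0, and let h : ℝ^d → ℝ be a measurable function with |h(y)| ≤ σ for all y ∈ ℝ^d. Then for every x ∈ ℝ^d the vector v := E_e[h(x + t·e)·e], where e is uniformly distributed on the unit sphere S^{d−1} = {y ∈ ℝ^d : ‖y‖ = 1}, satisfies ‖v‖² ≤ σ²/d. -/

import Mathlib

open MeasureTheory

/-- The uniform (rotation-invariant) probability measure on the unit sphere of `ℝ^d`,
viewed as a measure on `ℝ^d` (normalization of the spherical measure `volume.toSphere`). -/
noncomputable def sphereUniform (d : ℕ) : Measure (EuclideanSpace ℝ (Fin d)) :=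
  Measure.map Subtype.val
    (((volume : Measure (EuclideanSpace ℝ (Fin d))).toSphere Set.univ)⁻¹ •
      (volume : Measure (EuclideanSpace ℝ (Fin d))).toSphere)


open Metric
open scoped RealInnerProductSpace Pointwise

variable {d : ℕ}

section aux
local notation "E" => EuclideanSpace ℝ (Fin d)

lemma sphere_map_toSphere (f : E ≃ₗᵢ[ℝ] E) :
    Measure.map (fun e : sphere (0:E) 1 => (⟨f e, by
      simp [mem_sphere_zero_iff_norm, f.norm_map, mem_sphere_zero_iff_norm.1 e.2]⟩ :
        sphere (0:E) 1)) (volume : Measure E).toSphere = (volume : Measure E).toSphere := by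
  set g : sphere (0:E) 1 → sphere (0:E) 1 := fun e => ⟨f e, by
      simp [mem_sphere_zero_iff_norm, f.norm_map, mem_sphere_zero_iff_norm.1 e.2]⟩
  have hgc : Continuous g := Continuous.subtype_mk (f.continuous.comp continuous_subtype_val) _
  ext s hs
  rw [Measure.map_apply hgc.measurable hs]
  rw [Measure.toSphere_apply' _ (hgc.measurable hs), Measure.toSphere_apply' _ hs]
  congr 1
  have himg : Subtype.val '' (g ⁻¹' s) = f ⁻¹' (Subtype.val '' s) := by
    ext y
    constructor
    · rintro ⟨e, he, rfl⟩
      exact ⟨g e, he, rfl⟩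
    · rintro ⟨e', he', hfe⟩
      have hy : y ∈ sphere (0:E) 1 := by
        rw [mem_sphere_zero_iff_norm, ← f.norm_map, ← hfe]
        exact mem_sphere_zero_iff_norm.1 e'.2
      refine ⟨⟨y, hy⟩, ?_, rfl⟩
      show g ⟨y, hy⟩ ∈ s
      have : g ⟨y, hy⟩ = e' := Subtype.ext hfe.symm
      rw [this]; exact he'
  rw [himg]
  have hsm : Set.Ioo (0:ℝ) 1 • (f ⁻¹' (Subtype.val '' s))
      = f ⁻¹' (Set.Ioo (0:ℝ) 1 • (Subtype.val '' s)) := by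
    ext x
    constructor
    · rintro ⟨r, hr, a, ha, rfl⟩
      exact ⟨r, hr, f a, ha, (f.map_smul r a).symm⟩
    · rintro ⟨r, hr, a, ha, hx⟩
      refine ⟨r, hr, f.symm a, by simpa using ha, ?_⟩
      apply f.injective
      rw [← hx, f.map_smul, f.apply_symm_apply]
  rw [hsm]
  have hmp : Measure.map (f : E → E) volume = volume :=
    (LinearIsometryEquiv.measurePreserving f).map_eq
  calc volume ((f : E → E) ⁻¹' (Set.Ioo (0:ℝ) 1 • (Subtype.val '' s)))
      = (Measure.map (f.toHomeomorph.toMeasurableEquiv) volume)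
          (Set.Ioo (0:ℝ) 1 • (Subtype.val '' s)) := by
        rw [(f.toHomeomorph.toMeasurableEquiv).map_apply]
        rfl
    _ = volume (Set.Ioo (0:ℝ) 1 • (Subtype.val '' s)) := by
        have : (f.toHomeomorph.toMeasurableEquiv : E → E) = (f : E → E) := rfl
        rw [show Measure.map (f.toHomeomorph.toMeasurableEquiv) (volume : Measure E)
            = Measure.map (f : E → E) volume from by rw [this], hmp]

lemma map_sphereUniform (f : E ≃ₗᵢ[ℝ] E) :
    Measure.map f (sphereUniform d) = sphereUniform d := by
  set g : sphere (0:E) 1 → sphere (0:E) 1 := fun e => ⟨f e, by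
      simp [mem_sphere_zero_iff_norm, f.norm_map, mem_sphere_zero_iff_norm.1 e.2]⟩
  have hgc : Continuous g := Continuous.subtype_mk (f.continuous.comp continuous_subtype_val) _
  rw [sphereUniform, Measure.map_map f.continuous.measurable measurable_subtype_coe]
  have hcomp : (f ∘ Subtype.val : sphere (0:E) 1 → E) = Subtype.val ∘ g := rfl
  rw [hcomp, ← Measure.map_map measurable_subtype_coe hgc.measurable, Measure.map_smul,
    sphere_map_toSphere f]

lemma sphereUniform_isProb (hd : 1 ≤ d) : IsProbabilityMeasure (sphereUniform d) := by
  haveI : Nontrivial E := by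
    refine nontrivial_of_ne (EuclideanSpace.single ⟨0, hd⟩ (1:ℝ)) 0 ?_
    intro hcontra
    have := congrArg (fun z : E => z ⟨0, hd⟩) hcontra
    simpa using this
  constructor
  rw [sphereUniform, Measure.map_apply measurable_subtype_coe MeasurableSet.univ,
    Set.preimage_univ, Measure.smul_apply, smul_eq_mul]
  have hfin : (volume : Measure E).toSphere Set.univ ≠ ⊤ := measure_ne_top _ _
  have hpos : (volume : Measure E).toSphere Set.univ ≠ 0 := by
    rw [Measure.toSphere_apply_univ]
    refine mul_ne_zero ?_ ?_
    · simp [finrank_euclideanSpace_fin]; omega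
    · exact (measure_ball_pos _ _ one_pos).ne'
  exact ENNReal.inv_mul_cancel hpos hfin

lemma sphereUniform_ae_norm (d : ℕ) : ∀ᵐ e ∂(sphereUniform d), ‖e‖ = 1 := by
  rw [sphereUniform]
  have hms : MeasurableSet {y : EuclideanSpace ℝ (Fin d) | ‖y‖ = 1} :=
    (isClosed_eq continuous_norm continuous_const).measurableSet
  rw [ae_map_iff measurable_subtype_coe.aemeasurable hms]
  exact Filter.Eventually.of_forall fun e => mem_sphere_zero_iff_norm.1 e.2

lemma integrable_inner_sq (hd : 1 ≤ d) (v : E) :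
    Integrable (fun e : E => ⟪v, e⟫ ^ 2) (sphereUniform d) := by
  haveI := sphereUniform_isProb hd
  refine Integrable.mono' (integrable_const (‖v‖^2))
    ((Continuous.inner continuous_const continuous_id).pow 2).aestronglyMeasurable ?_
  filter_upwards [sphereUniform_ae_norm d] with e he
  have h1 : |⟪v, e⟫| ≤ ‖v‖ * ‖e‖ := abs_real_inner_le_norm v e
  rw [he, mul_one] at h1
  rw [Real.norm_eq_abs, abs_pow, sq_abs, ← sq_abs (⟪v, e⟫)]
  exact pow_le_pow_left₀ (abs_nonneg _) h1 2

lemma inner_sq_integral_congr (hd : 1 ≤ d) (u w : E) (hu : ‖u‖ = 1) (hw : ‖w‖ = 1) :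
    ∫ e, ⟪u, e⟫ ^ 2 ∂(sphereUniform d) = ∫ e, ⟪w, e⟫ ^ 2 ∂(sphereUniform d) := by
  set f := Submodule.reflection (ℝ ∙ (w - u))ᗮ with hf
  have hfw : f w = u := Submodule.reflection_sub (by rw [hw, hu])
  calc ∫ e, ⟪u, e⟫ ^ 2 ∂(sphereUniform d)
      = ∫ e, ⟪u, e⟫ ^ 2 ∂(Measure.map f (sphereUniform d)) := by rw [map_sphereUniform]
    _ = ∫ e, ⟪u, f e⟫ ^ 2 ∂(sphereUniform d) := by
        rw [integral_map f.continuous.measurable.aemeasurable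
          ((Continuous.inner continuous_const continuous_id).pow 2).aestronglyMeasurable]
    _ = ∫ e, ⟪w, e⟫ ^ 2 ∂(sphereUniform d) := by
        congr 1; funext e
        rw [← hfw, f.inner_map_map]

lemma inner_sq_integral_eq (hd : 1 ≤ d) (u : E) (hu : ‖u‖ = 1) :
    ∫ e, ⟪u, e⟫ ^ 2 ∂(sphereUniform d) = 1 / d := by
  haveI := sphereUniform_isProb hd
  set μ := sphereUniform d with hμ
  set b := EuclideanSpace.basisFun (Fin d) ℝ with hb
  have hbn : ∀ i, ‖(b i : E)‖ = 1 := fun i => b.orthonormal.1 i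
  have hic : ∀ i : Fin d, ∫ e, ⟪(b i : E), e⟫ ^ 2 ∂μ = ∫ e, ⟪u, e⟫ ^ 2 ∂μ :=
    fun i => inner_sq_integral_congr hd _ u (hbn i) hu
  have hsum : ∑ i : Fin d, ∫ e, ⟪(b i : E), e⟫ ^ 2 ∂μ = 1 := by
    rw [← integral_finset_sum _ (fun i _ => integrable_inner_sq hd _)]
    have hae : ∀ᵐ e ∂μ, ∑ i : Fin d, ⟪(b i : E), e⟫ ^ 2 = 1 := by
      filter_upwards [sphereUniform_ae_norm d] with e he
      have h1 : ∑ i : Fin d, ⟪e, (b i : E)⟫ * ⟪(b i : E), e⟫ = ⟪e, e⟫ :=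
        b.sum_inner_mul_inner e e
      calc ∑ i : Fin d, ⟪(b i : E), e⟫ ^ 2
          = ∑ i : Fin d, ⟪e, (b i : E)⟫ * ⟪(b i : E), e⟫ := by
            refine Finset.sum_congr rfl fun i _ => ?_
            rw [real_inner_comm ((b i : E)) e, sq]
        _ = ⟪e, e⟫ := h1
        _ = 1 := by rw [real_inner_self_eq_norm_sq, he, one_pow]
    rw [integral_congr_ae hae]
    simp
  have hds : ∑ i : Fin d, ∫ e, ⟪(b i : E), e⟫ ^ 2 ∂μ
      = (d : ℝ) * ∫ e, ⟪u, e⟫ ^ 2 ∂μ := by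
    rw [Finset.sum_congr rfl fun i _ => hic i, Finset.sum_const, Finset.card_univ,
      Fintype.card_fin, nsmul_eq_mul]
  have hd0 : (d : ℝ) ≠ 0 := by positivity
  have : (d : ℝ) * ∫ e, ⟪u, e⟫ ^ 2 ∂μ = 1 := by rw [← hds]; exact hsum
  field_simp at this ⊢
  linarith

lemma inner_sq_integral (hd : 1 ≤ d) (v : E) :
    ∫ e, ⟪v, e⟫ ^ 2 ∂(sphereUniform d) = ‖v‖ ^ 2 / d := by
  rcases eq_or_ne v 0 with rfl | hv
  · simp
  · have hvn : ‖v‖ ≠ 0 := norm_ne_zero_iff.2 hv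
    set u : E := ‖v‖⁻¹ • v with hu
    have hun : ‖u‖ = 1 := norm_smul_inv_norm hv
    have hrw : ∀ e : E, ⟪v, e⟫ ^ 2 = ‖v‖ ^ 2 * ⟪u, e⟫ ^ 2 := by
      intro e
      rw [hu, real_inner_smul_left]
      field_simp
    calc ∫ e, ⟪v, e⟫ ^ 2 ∂(sphereUniform d)
        = ∫ e, ‖v‖ ^ 2 * ⟪u, e⟫ ^ 2 ∂(sphereUniform d) := by
          congr 1; funext e; exact hrw e
      _ = ‖v‖ ^ 2 * ∫ e, ⟪u, e⟫ ^ 2 ∂(sphereUniform d) := integral_const_mul _ _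
      _ = ‖v‖ ^ 2 * (1 / d) := by rw [inner_sq_integral_eq hd u hun]
      _ = ‖v‖ ^ 2 / d := by ring

end aux

theorem norm_sq_smoothed_noise_le {d : ℕ} (hd : 1 ≤ d) (t σ : ℝ) (ht : 0 < t) (hσ : 0 ≤ σ)
    (h : EuclideanSpace ℝ (Fin d) → ℝ) (hmeas : Measurable h)
    (hbound : ∀ y : EuclideanSpace ℝ (Fin d), |h y| ≤ σ)
    (x : EuclideanSpace ℝ (Fin d)) :
    ‖∫ e, h (x + t • e) • e ∂(sphereUniform d)‖ ^ 2 ≤ σ ^ 2 / d := by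
  haveI := sphereUniform_isProb hd
  set μ := sphereUniform d with hμ
  have haen := sphereUniform_ae_norm d
  set F : EuclideanSpace ℝ (Fin d) → EuclideanSpace ℝ (Fin d) :=
    fun e => h (x + t • e) • e with hF
  have hhm : Measurable (fun e : EuclideanSpace ℝ (Fin d) => h (x + t • e)) :=
    hmeas.comp (measurable_const.add (measurable_id.const_smul t))
  have hFmeas : Measurable F := hhm.smul measurable_id
  have hFint : Integrable F μ := by
    refine Integrable.mono' (integrable_const σ) hFmeas.aestronglyMeasurable ?_
    filter_upwards [haen] with e he
    rw [hF, norm_smul, he, mul_one, Real.norm_eq_abs]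
    exact hbound _
  set v := ∫ e, F e ∂μ with hv
  show ‖v‖ ^ 2 ≤ σ ^ 2 / d
  have hd0 : (0:ℝ) < d := by exact_mod_cast hd
  rcases eq_or_ne v 0 with h0 | h0
  · rw [h0]; simp; positivity
  have hσpos : 0 < σ := by
    rcases hσ.lt_or_eq with h' | h'
    · exact h'
    · exfalso; apply h0
      have hz : ∀ e : EuclideanSpace ℝ (Fin d), F e = 0 := by
        intro e
        have hb2 := hbound (x + t • e)
        rw [← h'] at hb2
        have : h (x + t • e) = 0 := abs_nonpos_iff.1 hb2
        simp [hF, this]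
      rw [hv]
      simp only [hz, integral_zero]
  have hvpos : 0 < ‖v‖ := norm_pos_iff.2 h0
  set s := Real.sqrt d with hs
  have hspos : 0 < s := Real.sqrt_pos.2 hd0
  have hs2 : s ^ 2 = d := Real.sq_sqrt hd0.le
  set c := ‖v‖ / (σ * s) with hc
  have hcpos : 0 < c := div_pos hvpos (mul_pos hσpos hspos)
  have hInt1 : Integrable (fun e => h (x + t • e) * ⟪v, e⟫) μ := by
    have h1 := hFint.const_inner (𝕜 := ℝ) v
    refine h1.congr (Filter.Eventually.of_forall fun e => ?_)
    rw [hF]; exact real_inner_smul_right v e (h (x + t • e))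
  have step1 : ‖v‖ ^ 2 = ∫ e, h (x + t • e) * ⟪v, e⟫ ∂μ := by
    have h1 : ∫ e, ⟪v, F e⟫ ∂μ = ⟪v, v⟫ := by
      rw [integral_inner (𝕜 := ℝ) hFint v, ← hv]
    have h2 : ∫ e, ⟪v, F e⟫ ∂μ = ∫ e, h (x + t • e) * ⟪v, e⟫ ∂μ := by
      congr 1; funext e
      rw [hF]; exact real_inner_smul_right v e (h (x + t • e))
    rw [← real_inner_self_eq_norm_sq, ← h1, h2]
  have hh2int : Integrable (fun e => h (x + t • e) ^ 2) μ := by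
    refine Integrable.mono' (integrable_const (σ ^ 2)) (hhm.pow_const 2).aestronglyMeasurable ?_
    refine Filter.Eventually.of_forall fun e => ?_
    have h1 : |h (x + t • e)| ^ 2 ≤ σ ^ 2 :=
      pow_le_pow_left₀ (abs_nonneg _) (hbound (x + t • e)) 2
    rw [sq_abs] at h1
    rw [Real.norm_eq_abs, abs_pow, sq_abs]
    exact h1
  have hp2int := integrable_inner_sq hd v
  have step3 : ∫ e, h (x + t • e) * ⟪v, e⟫ ∂μ
      ≤ ∫ e, (c * h (x + t • e) ^ 2 + ⟪v, e⟫ ^ 2 / c) / 2 ∂μ := by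
    refine integral_mono_ae hInt1
      (((hh2int.const_mul c).add (hp2int.div_const c)).div_const 2) ?_
    refine Filter.Eventually.of_forall fun e => ?_
    have amgm : ∀ a b : ℝ, a * b ≤ (c * a ^ 2 + b ^ 2 / c) / 2 := by
      intro a b
      rw [le_div_iff₀ (by norm_num : (0:ℝ) < 2), ← sub_nonneg]
      have heq : c * a ^ 2 + b ^ 2 / c - a * b * 2 = (c * a - b) ^ 2 / c := by
        field_simp; ring
      rw [heq]; positivity
    exact amgm _ _
  have step4 : ∫ e, (c * h (x + t • e) ^ 2 + ⟪v, e⟫ ^ 2 / c) / 2 ∂μ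
      = (c * (∫ e, h (x + t • e) ^ 2 ∂μ) + (∫ e, ⟪v, e⟫ ^ 2 ∂μ) / c) / 2 := by
    rw [integral_div, integral_add (hh2int.const_mul c) (hp2int.div_const c),
      integral_const_mul, integral_div]
  have step5 : ∫ e, h (x + t • e) ^ 2 ∂μ ≤ σ ^ 2 := by
    calc ∫ e, h (x + t • e) ^ 2 ∂μ ≤ ∫ _e, σ ^ 2 ∂μ := by
          refine integral_mono hh2int (integrable_const _) fun e => ?_
          have := hbound (x + t • e)
          nlinarith [abs_nonneg (h (x + t • e)), sq_abs (h (x + t • e))]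
      _ = σ ^ 2 := by simp
  have step6 : ∫ e, ⟪v, e⟫ ^ 2 ∂μ = ‖v‖ ^ 2 / d := inner_sq_integral hd v
  have key : ‖v‖ ^ 2 ≤ σ * ‖v‖ / s := by
    have h1 : ‖v‖ ^ 2 ≤ (c * (∫ e, h (x + t • e) ^ 2 ∂μ) + (‖v‖ ^ 2 / d) / c) / 2 := by
      rw [← step6, ← step4, step1]; exact step3
    have h2 : (c * (∫ e, h (x + t • e) ^ 2 ∂μ) + (‖v‖ ^ 2 / d) / c) / 2
        ≤ (c * σ ^ 2 + (‖v‖ ^ 2 / d) / c) / 2 := by gcongr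
    have harith : (c * σ ^ 2 + (‖v‖ ^ 2 / (d:ℝ)) / c) / 2 = σ * ‖v‖ / s := by
      rw [hc, ← hs2]
      field_simp
      ring
    linarith
  have key' : ‖v‖ ^ 2 * s ≤ σ * ‖v‖ := (le_div_iff₀ hspos).1 key
  have key2 : ‖v‖ ≤ σ / s := by
    rw [le_div_iff₀ hspos]
    nlinarith [key', hvpos]
  calc ‖v‖ ^ 2 ≤ (σ / s) ^ 2 := pow_le_pow_left₀ (norm_nonneg v) key2 2
    _ = σ ^ 2 / d := by rw [div_pow, hs2]
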